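/- For any integers q ≥ 2 and i with 1 ≤ i ≤ q, in the group above one has ψ_i = ((i−1)q + i)·ψ_1, and (q^2+1)(q+1)·ψ_1 = 0. -/

import Mathlib

/-- In the abelian group presented by `(q+2)ψ_q = ψ_{q-1}`, `2ψ_i = ψ_{i+1} + ψ_{i-1}`
(`1 < i < q`), `(q+2)ψ₁ = ψ₂` (i.e. the cokernel of the matrix `M`), one has
`ψ_i = ((i-1)q + i)·ψ₁` for `1 ≤ i ≤ q` (here `i = j+1` for `j : Fin q`) and
`(q²+1)(q+1)·ψ₁ = 0`. -/
theorem stmt_6 (q : ℕ) (hq : 2 ≤ q)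
    (M : Matrix (Fin q) (Fin q) ℤ)
    (hM : ∀ i j : Fin q, M i j =
      if i = j then (if i.val = 0 ∨ i.val = q - 1 then (q : ℤ) + 2 else 2)
      else if i.val + 1 = j.val ∨ j.val + 1 = i.val then -1 else 0) :
    (∀ j : Fin q,
      (Submodule.Quotient.mk (Pi.single j (1 : ℤ)) :
          (Fin q → ℤ) ⧸ LinearMap.range M.mulVecLin)
        = ((j.val : ℤ) * q + j.val + 1) •
            (Submodule.Quotient.mk (Pi.single (⟨0, by omega⟩ : Fin q) (1 : ℤ)))) ∧
    ((((q : ℤ) ^ 2 + 1) * ((q : ℤ) + 1)) •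
        (Submodule.Quotient.mk (Pi.single (⟨0, by omega⟩ : Fin q) (1 : ℤ)) :
          (Fin q → ℤ) ⧸ LinearMap.range M.mulVecLin) = 0) := by
  set Q := (Fin q → ℤ) ⧸ LinearMap.range M.mulVecLin with hQ
  set ψ : Fin q → Q := fun j => Submodule.Quotient.mk (Pi.single j (1 : ℤ)) with hψ
  have rel : ∀ j : Fin q, (Submodule.Quotient.mk (fun i => M i j) : Q) = 0 := by
    intro j
    rw [Submodule.Quotient.mk_eq_zero]
    exact ⟨Pi.single j 1, by simp [Matrix.mulVecLin]; rfl⟩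
  have h0 : (1 : ℕ) < q := hq
  -- column 0
  have rel0 : ψ ⟨1, h0⟩ = ((q : ℤ) + 2) • ψ ⟨0, by omega⟩ := by
    have e : (fun i => M i ⟨0, by omega⟩) =
        ((q : ℤ) + 2) • Pi.single (⟨0, by omega⟩ : Fin q) 1 - Pi.single (⟨1, h0⟩ : Fin q) 1 := by
      funext i
      rcases i with ⟨iv, hi⟩
      simp only [hM, Pi.sub_apply, Pi.smul_apply, Pi.single_apply, smul_eq_mul,
        Fin.mk.injEq, mul_ite, mul_one, mul_zero]
      split_ifs <;> first | omega | (simp_all; omega) | simp_all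
    have h := rel ⟨0, by omega⟩
    rw [e, Submodule.Quotient.mk_sub, Submodule.Quotient.mk_smul, sub_eq_zero] at h
    exact h.symm
  -- interior columns
  have relMid : ∀ n : ℕ, 0 < n → (h2 : n < q - 1) →
      ψ ⟨n+1, by omega⟩ = (2:ℤ) • ψ ⟨n, by omega⟩ - ψ ⟨n-1, by omega⟩ := by
    intro n h1 h2
    have e : (fun i => M i ⟨n, by omega⟩) =
        (2:ℤ) • Pi.single (⟨n, by omega⟩ : Fin q) 1 - Pi.single (⟨n-1, by omega⟩ : Fin q) 1
          - Pi.single (⟨n+1, by omega⟩ : Fin q) 1 := by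
      funext i
      rcases i with ⟨iv, hi⟩
      simp only [hM, Pi.sub_apply, Pi.smul_apply, Pi.single_apply, smul_eq_mul,
        Fin.mk.injEq, mul_ite, mul_one, mul_zero]
      split_ifs <;> first | omega | (simp_all; omega) | simp_all
    have h := rel ⟨n, by omega⟩
    rw [e, Submodule.Quotient.mk_sub, Submodule.Quotient.mk_sub,
      Submodule.Quotient.mk_smul, sub_sub, sub_eq_zero] at h
    rw [eq_comm, sub_eq_iff_eq_add]
    exact h.trans (add_comm _ _)
  -- last column
  have relLast : ((q : ℤ) + 2) • ψ ⟨q-1, by omega⟩ = ψ ⟨q-2, by omega⟩ := by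
    have e : (fun i => M i ⟨q-1, by omega⟩) =
        ((q : ℤ) + 2) • Pi.single (⟨q-1, by omega⟩ : Fin q) 1
          - Pi.single (⟨q-2, by omega⟩ : Fin q) 1 := by
      funext i
      rcases i with ⟨iv, hi⟩
      simp only [hM, Pi.sub_apply, Pi.smul_apply, Pi.single_apply, smul_eq_mul,
        Fin.mk.injEq, mul_ite, mul_one, mul_zero]
      split_ifs <;> first | omega | (simp_all; omega) | simp_all
    have h := rel ⟨q-1, by omega⟩
    rw [e, Submodule.Quotient.mk_sub, Submodule.Quotient.mk_smul, sub_eq_zero] at h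
    exact h
  -- main induction
  have main : ∀ n : ℕ, (h : n + 1 < q) →
      ψ ⟨n, by omega⟩ = ((n:ℤ) * q + n + 1) • ψ ⟨0, by omega⟩ ∧
      ψ ⟨n+1, by omega⟩ = (((n:ℤ)+1) * q + (n+1) + 1) • ψ ⟨0, by omega⟩ := by
    intro n
    induction n with
    | zero =>
      intro h
      refine ⟨by norm_num, ?_⟩
      rw [rel0]
      congr 1
      push_cast
      ring
    | succ m ih =>
      intro h
      obtain ⟨h1, h2⟩ := ih (by omega)
      refine ⟨by push_cast; exact h2, ?_⟩
      have h3 := relMid (m+1) (by omega) (by omega)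
      simp only [Nat.add_sub_cancel] at h3
      rw [h3, h1, h2, smul_smul, ← sub_smul]
      congr 1
      push_cast
      ring
  have final : ∀ n : ℕ, (h : n < q) → ψ ⟨n, h⟩ = ((n:ℤ) * q + n + 1) • ψ ⟨0, by omega⟩ := by
    intro n h
    by_cases hc : n + 1 < q
    · exact (main n hc).1
    · have hn : n = q - 1 := by omega
      have := (main (n-1) (by omega)).2
      have hrw : n - 1 + 1 = n := by omega
      rw [show (⟨n-1+1, by omega⟩ : Fin q) = ⟨n, h⟩ from by simp [Fin.ext_iff, hrw]] at this
      rw [this]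
      congr 1
      have : ((n:ℤ)) = ((n-1 : ℕ) : ℤ) + 1 := by push_cast [Nat.cast_sub (by omega : 1 ≤ n)]; try ring
      rw [this]
      try push_cast
      try ring
  constructor
  · intro j
    have := final j.val j.isLt
    rwa [show (⟨j.val, j.isLt⟩ : Fin q) = j from Fin.eta j j.isLt] at this
  · have e1 := final (q-1) (by omega)
    have e2 := final (q-2) (by omega)
    have h := relLast
    rw [e1, e2, smul_smul, ← sub_eq_zero, ← sub_smul] at h
    rw [← h]
    congr 1
    have c1 : (((q-1 : ℕ)) : ℤ) = (q : ℤ) - 1 := by push_cast [Nat.cast_sub (by omega : 1 ≤ q)]; try ring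
    have c2 : (((q-2 : ℕ)) : ℤ) = (q : ℤ) - 2 := by push_cast [Nat.cast_sub (by omega : 2 ≤ q)]; try ring
    rw [c1, c2]
    ring
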